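/- Let T be a tree with radius r, and let D⃗ be a directed graph on vertex set V. Suppose V is partitioned into nonempty sets V₁, ..., V_t defined by: V_{i+1} is the set of vertices with in-degree less than |V(T)| in D⃗ restricted to V \ (V₁ ∪ ... ∪ V_i). If D⃗ does not contain a copy of T⃗ (the orientation of T with all edges directed toward a fixed center), then t ≤ r, i.e., the partition process terminates in at most r rounds. -/

import Mathlib

open Finset

/-- In a tree with a fixed center `c`, every vertex `u ≠ c` has a unique neighbor
strictly closer to `c`. -/
lemma tree_exists_parent {α : Type} (T : SimpleGraph α) (hT : T.IsTree) (c u : α)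
    (hu : u ≠ c) :
    ∃ p : α, T.Adj u p ∧ T.dist p c + 1 = T.dist u c ∧
      ∀ w, T.Adj u w → T.dist w c < T.dist u c → w = p := by
  classical
  have hconn := hT.isConnected
  have hd0 : T.dist u c ≠ 0 := by
    have := hconn.pos_dist_of_ne hu
    omega
  -- triangle through an adjacent vertex
  have hstep : ∀ w, T.Adj u w → T.dist u c ≤ T.dist w c + 1 := by
    intro w hw
    obtain ⟨q, hq⟩ := (hconn.preconnected w c).exists_walk_length_eq_dist
    have := SimpleGraph.dist_le (SimpleGraph.Walk.cons hw q)
    simpa [hq] using this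
  -- uniqueness of a closer neighbor
  have huniq : ∀ w₁ w₂, T.Adj u w₁ → T.Adj u w₂ → T.dist w₁ c < T.dist u c →
      T.dist w₂ c < T.dist u c → w₁ = w₂ := by
    intro w₁ w₂ h1 h2 hl1 hl2
    obtain ⟨q1, hq1⟩ := (hconn.preconnected w₁ c).exists_walk_length_eq_dist
    obtain ⟨q2, hq2⟩ := (hconn.preconnected w₂ c).exists_walk_length_eq_dist
    have he1 : T.dist w₁ c + 1 = T.dist u c := by have := hstep w₁ h1; omega
    have he2 : T.dist w₂ c + 1 = T.dist u c := by have := hstep w₂ h2; omega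
    have hp1 : (SimpleGraph.Walk.cons h1 q1).IsPath := by
      apply SimpleGraph.Walk.isPath_of_length_eq_dist
      simp [hq1, he1]
    have hp2 : (SimpleGraph.Walk.cons h2 q2).IsPath := by
      apply SimpleGraph.Walk.isPath_of_length_eq_dist
      simp [hq2, he2]
    have heq : SimpleGraph.Walk.cons h1 q1 = SimpleGraph.Walk.cons h2 q2 :=
      ((hT.existsUnique_path u c).unique hp1 hp2)
    have hsup := congrArg SimpleGraph.Walk.support heq
    rw [SimpleGraph.Walk.support_cons, SimpleGraph.Walk.support_cons] at hsup
    have hts : q1.support = q2.support := by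
      injection hsup
    have h1s : q1.support = w₁ :: q1.support.tail := q1.support_eq_cons
    have h2s : q2.support = w₂ :: q2.support.tail := q2.support_eq_cons
    rw [h1s, h2s] at hts
    injection hts
  -- existence of a closer neighbor
  obtain ⟨p0, hp0len⟩ := SimpleGraph.exists_walk_of_dist_ne_zero hd0
  cases p0 with
  | nil => exact absurd rfl hu
  | cons hadj q =>
    rename_i b
    have hlen : q.length + 1 = T.dist u c := by
      simpa [SimpleGraph.Walk.length_cons] using hp0len
    have hble : T.dist b c ≤ q.length := SimpleGraph.dist_le q
    have hb : T.dist b c + 1 = T.dist u c := by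
      have := hstep b hadj
      omega
    refine ⟨b, hadj, hb, ?_⟩
    intro w hw hwl
    exact huniq w b hw hadj hwl (by omega)

/-- Greedy embedding of a tree (oriented towards its center `c`) into a digraph `D`,
using a family of vertex sets `S k` with large in-degrees from `S k` into `S (k+1)`. -/
lemma greedy_embed {α V : Type} [Fintype α] [DecidableEq V]
    (T : SimpleGraph α) (hT : T.IsTree) (r : ℕ) (c : α)
    (hecc : ∀ u, T.dist u c ≤ r)
    (D : V → V → Prop) [DecidableRel D]
    (S : ℕ → Finset V) (v : V) (hv : v ∈ S r)
    (hexp : ∀ (w : V) (k : ℕ), k < r → w ∈ S (k + 1) →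
      Fintype.card α ≤ ((S k).filter (fun u => D u w)).card) :
    ∃ φ : α → V, Function.Injective φ ∧
      ∀ u w : α, T.Adj u w → T.dist w c < T.dist u c → D (φ u) (φ w) := by
  classical
  -- parent function
  have hpar' : ∀ u : α, ∃ p : α, u ≠ c → T.Adj u p ∧ T.dist p c + 1 = T.dist u c ∧
      ∀ w, T.Adj u w → T.dist w c < T.dist u c → w = p := by
    intro u
    by_cases h : u = c
    · exact ⟨c, fun h' => absurd h h'⟩
    · obtain ⟨p, h1, h2, h3⟩ := tree_exists_parent T hT c u h
      exact ⟨p, fun _ => ⟨h1, h2, h3⟩⟩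
  choose par hpar using hpar'
  -- list of all vertices sorted by distance to c
  set le : α → α → Bool := fun a b => decide (T.dist a c ≤ T.dist b c) with hle
  set L : List α := (Finset.univ.toList (α := α)).mergeSort le with hLdef
  have hperm : L.Perm Finset.univ.toList := List.mergeSort_perm _ _
  have hnodup : L.Nodup := (hperm.nodup_iff).mpr (Finset.nodup_toList _)
  have hmemL : ∀ a : α, a ∈ L := fun a =>
    hperm.mem_iff.mpr (Finset.mem_toList.mpr (Finset.mem_univ a))
  have hlenL : L.length = Fintype.card α := by
    rw [hperm.length_eq, Finset.length_toList, Finset.card_univ]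
  have hsorted : L.Pairwise (fun a b => T.dist a c ≤ T.dist b c) := by
    have := List.pairwise_mergeSort (le := le)
      (fun a b d h1 h2 => by simp only [hle, decide_eq_true_eq] at *; omega)
      (fun a b => by simp only [hle, Bool.or_eq_true, decide_eq_true_eq]; omega)
      (Finset.univ.toList (α := α))
    rw [← hLdef] at this
    simpa [hle] using this
  -- main induction: extend a partial embedding along the sorted list
  have main : ∀ (L₂ L₁ : List α) (f : α → V), L₁ ++ L₂ = L →
      ((∀ a ∈ L₁, ∀ b ∈ L₁, f a = f b → a = b) ∧
       (∀ a ∈ L₁, f a ∈ S (r - T.dist a c)) ∧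
       (∀ a ∈ L₁, a ≠ c → par a ∈ L₁ ∧ D (f a) (f (par a)))) →
      ∃ g : α → V,
        (∀ a ∈ L₁ ++ L₂, ∀ b ∈ L₁ ++ L₂, g a = g b → a = b) ∧
        (∀ a ∈ L₁ ++ L₂, g a ∈ S (r - T.dist a c)) ∧
        (∀ a ∈ L₁ ++ L₂, a ≠ c → par a ∈ L₁ ++ L₂ ∧ D (g a) (g (par a))) := by
    intro L₂
    induction L₂ with
    | nil =>
      intro L₁ f _ hInv
      exact ⟨f, by simpa using hInv⟩
    | cons u L₂' ih =>
      intro L₁ f hL hInv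
      obtain ⟨hinj, hmem, hparent⟩ := hInv
      -- structural facts
      have hnodup' : (L₁ ++ u :: L₂').Nodup := by rw [hL]; exact hnodup
      have huL₁ : u ∉ L₁ := by
        rw [List.nodup_append] at hnodup'
        intro hc
        exact hnodup'.2.2 u hc u List.mem_cons_self rfl
      have hsorted' : (L₁ ++ u :: L₂').Pairwise (fun a b => T.dist a c ≤ T.dist b c) := by
        rw [hL]; exact hsorted
      rw [List.pairwise_append] at hsorted'
      have hcross : ∀ a ∈ L₁, T.dist a c ≤ T.dist u c := fun a ha =>
        hsorted'.2.2 a ha u List.mem_cons_self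
      have hafter : ∀ b ∈ L₂', T.dist u c ≤ T.dist b c := fun b hb =>
        (List.pairwise_cons.mp hsorted'.2.1).1 b hb
      by_cases huc : u = c
      · -- u = c : then L₁ is empty, map c to v
        have hducc : T.dist u c = 0 := by rw [huc, SimpleGraph.dist_self]
        have hL₁nil : L₁ = [] := by
          rw [List.eq_nil_iff_forall_not_mem]
          intro a ha
          have h1 : T.dist a c ≤ T.dist u c := hcross a ha
          rw [hducc] at h1
          have ha2 : a = c := by
            by_contra hne
            have := hT.isConnected.pos_dist_of_ne hne
            omega
          exact huL₁ ((ha2.trans huc.symm) ▸ ha)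
        subst hL₁nil
        set g := Function.update f u v with hg
        have hg_u : g u = v := Function.update_self u v f
        have hstep : ∃ g' : α → V,
            (∀ a ∈ ([u] ++ L₂'), ∀ b ∈ ([u] ++ L₂'), g' a = g' b → a = b) ∧
            (∀ a ∈ ([u] ++ L₂'), g' a ∈ S (r - T.dist a c)) ∧
            (∀ a ∈ ([u] ++ L₂'), a ≠ c → par a ∈ ([u] ++ L₂') ∧ D (g' a) (g' (par a))) := by
          apply ih [u] g (by simpa using hL)
          refine ⟨?_, ?_, ?_⟩
          · intro a ha b hb _
            simp only [List.mem_singleton] at ha hb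
            rw [ha, hb]
          · intro a ha
            simp only [List.mem_singleton] at ha
            subst ha
            rw [hg_u, hducc, Nat.sub_zero]
            exact hv
          · intro a ha hac
            simp only [List.mem_singleton] at ha
            exact absurd (ha.trans huc) hac
        simpa using hstep
      · -- u ≠ c : extend using the expansion property
        have hd1 : 1 ≤ T.dist u c := hT.isConnected.pos_dist_of_ne huc
        have hdr : T.dist u c ≤ r := hecc u
        obtain ⟨hpadj, hpdist, hpuniq⟩ := hpar u huc
        have hpL₁ : par u ∈ L₁ := by
          have hpL : par u ∈ L₁ ++ u :: L₂' := by rw [hL]; exact hmemL (par u)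
          rcases List.mem_append.mp hpL with h | h
          · exact h
          · rcases List.mem_cons.mp h with h | h
            · exfalso; rw [h] at hpdist; omega
            · exfalso; have := hafter _ h; omega
        have hw₀ : f (par u) ∈ S (r - T.dist (par u) c) := hmem _ hpL₁
        have hkeq : r - T.dist (par u) c = (r - T.dist u c) + 1 := by omega
        rw [hkeq] at hw₀
        have hk : r - T.dist u c < r := by omega
        have hbig := hexp (f (par u)) (r - T.dist u c) hk hw₀
        set Used : Finset V := L₁.toFinset.image f with hUsedDef
        have hUsedCard : Used.card < Fintype.card α := by
          have h1 : Used.card ≤ L₁.toFinset.card := Finset.card_image_le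
          have h2 : L₁.toFinset.card ≤ L₁.length := L₁.toFinset_card_le
          have h3 : (L₁ ++ u :: L₂').length = L.length := by rw [hL]
          simp only [List.length_append, List.length_cons] at h3
          omega
        have hns : ¬ ((S (r - T.dist u c)).filter (fun x => D x (f (par u)))) ⊆ Used := by
          intro hsub
          have := Finset.card_le_card hsub
          omega
        obtain ⟨w, hwfil, hwUsed⟩ := Finset.not_subset.mp hns
        rw [Finset.mem_filter] at hwfil
        obtain ⟨hwS, hwD⟩ := hwfil
        set g := Function.update f u w with hg
        have hg_u : g u = w := Function.update_self u w f
        have hg_L₁ : ∀ a ∈ L₁, g a = f a := by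
          intro a ha
          have hau : a ≠ u := by
            intro h
            rw [h] at ha
            exact huL₁ ha
          exact Function.update_of_ne hau w f
        have hfUsed : ∀ a ∈ L₁, f a ∈ Used := by
          intro a ha
          exact Finset.mem_image_of_mem f (List.mem_toFinset.mpr ha)
        have hstep : ∃ g' : α → V,
            (∀ a ∈ ((L₁ ++ [u]) ++ L₂'), ∀ b ∈ ((L₁ ++ [u]) ++ L₂'), g' a = g' b → a = b) ∧
            (∀ a ∈ ((L₁ ++ [u]) ++ L₂'), g' a ∈ S (r - T.dist a c)) ∧
            (∀ a ∈ ((L₁ ++ [u]) ++ L₂'), a ≠ c →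
              par a ∈ ((L₁ ++ [u]) ++ L₂') ∧ D (g' a) (g' (par a))) := by
          apply ih (L₁ ++ [u]) g (by simpa [List.append_assoc] using hL)
          refine ⟨?_, ?_, ?_⟩
          · intro a ha b hb hab
            simp only [List.mem_append, List.mem_singleton] at ha hb
            rcases ha with ha | ha <;> rcases hb with hb | hb
            · exact hinj a ha b hb (by rwa [hg_L₁ a ha, hg_L₁ b hb] at hab)
            · subst hb
              rw [hg_L₁ a ha, hg_u] at hab
              exact absurd (hab ▸ hfUsed a ha) hwUsed
            · subst ha
              rw [hg_L₁ b hb, hg_u] at hab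
              exact absurd (hab ▸ hfUsed b hb) hwUsed
            · rw [ha, hb]
          · intro a ha
            simp only [List.mem_append, List.mem_singleton] at ha
            rcases ha with ha | ha
            · rw [hg_L₁ a ha]; exact hmem a ha
            · subst ha; rw [hg_u]; exact hwS
          · intro a ha hac
            simp only [List.mem_append, List.mem_singleton] at ha
            rcases ha with ha | ha
            · obtain ⟨hpa, hDa⟩ := hparent a ha hac
              refine ⟨List.mem_append.mpr (Or.inl hpa), ?_⟩
              rw [hg_L₁ a ha, hg_L₁ _ hpa]
              exact hDa
            · subst ha
              refine ⟨List.mem_append.mpr (Or.inl hpL₁), ?_⟩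
              rw [hg_u, hg_L₁ _ hpL₁]
              exact hwD
        obtain ⟨g', hg'1, hg'2, hg'3⟩ := hstep
        refine ⟨g', ?_, ?_, ?_⟩ <;> simp only [List.append_assoc, List.singleton_append] at *
        · exact hg'1
        · exact hg'2
        · exact hg'3
  obtain ⟨g, hg1, hg2, hg3⟩ := main L [] (fun _ => v) rfl
    ⟨by intro a ha; simp at ha, by intro a ha; simp at ha, by intro a ha; simp at ha⟩
  simp only [List.nil_append] at hg1 hg2 hg3
  refine ⟨g, fun a b hab => hg1 a (hmemL a) b (hmemL b) hab, ?_⟩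
  intro u w hadj hlt
  have huc : u ≠ c := by
    intro h
    rw [h, SimpleGraph.dist_self] at hlt
    omega
  have hweq : w = par u := (hpar u huc).2.2 w hadj hlt
  rw [hweq]
  exact (hg3 u (hmemL u) huc).2

/-- Peeling a digraph by low in-degree terminates within `r` rounds if the digraph
contains no copy of a radius-`r` tree oriented towards its center. -/
theorem peeling_terminates {α V : Type} [Fintype α] [Fintype V] [DecidableEq V]
    (T : SimpleGraph α) (hT : T.IsTree) (r : ℕ) (c : α)
    (hecc : ∀ u, T.dist u c ≤ r) (hradius : ∀ v : α, ∃ u : α, r ≤ T.dist u v)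
    (D : V → V → Prop) [DecidableRel D]
    (t : ℕ) (P : Fin t → Finset V)
    (hne : ∀ i, (P i).Nonempty)
    (hcover : Finset.univ.biUnion P = (Finset.univ : Finset V))
    (hdef : ∀ i : Fin t,
      P i = ((Finset.univ : Finset V) \
          ((Finset.univ.filter (fun j => j < i)).biUnion P)).filter
        (fun v => (((Finset.univ : Finset V) \
            ((Finset.univ.filter (fun j => j < i)).biUnion P)).filter
          (fun u => D u v)).card < Fintype.card α))
    (hnoT : ¬ ∃ φ : α → V, Function.Injective φ ∧
      ∀ u v : α, T.Adj u v → T.dist v c < T.dist u c → D (φ u) (φ v)) :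
    t ≤ r := by
  classical
  by_contra hcon
  push_neg at hcon
  -- the remaining sets
  set R : ℕ → Finset V := fun n =>
    Finset.univ \ ((Finset.univ.filter (fun j : Fin t => (j : ℕ) < n)).biUnion P) with hR
  have hPdef : ∀ i : Fin t, P i = (R (i : ℕ)).filter
      (fun v => ((R (i : ℕ)).filter (fun u => D u v)).card < Fintype.card α) := by
    intro i
    have : (Finset.univ.filter (fun j : Fin t => j < i)) =
        (Finset.univ.filter (fun j : Fin t => (j : ℕ) < (i : ℕ))) := by
      apply Finset.filter_congr
      intro j _
      exact Fin.lt_def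
    rw [hdef i, this, hR]
  have hstep : ∀ (n : ℕ), n < t → ∀ (w : V), w ∈ R (n + 1) →
      Fintype.card α ≤ ((R n).filter (fun u => D u w)).card := by
    intro n hn w hw
    simp only [hR, Finset.mem_sdiff, Finset.mem_univ, true_and, Finset.mem_biUnion,
      Finset.mem_filter, not_exists, not_and] at hw
    have hwRn : w ∈ R n := by
      simp only [hR, Finset.mem_sdiff, Finset.mem_univ, true_and, Finset.mem_biUnion,
        Finset.mem_filter, not_exists, not_and]
      intro j hj1 hj2
      exact hw j (by omega) hj2
    have hwP : w ∉ P ⟨n, hn⟩ := by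
      intro hc
      exact hw ⟨n, hn⟩ (by simp) hc
    rw [hPdef ⟨n, hn⟩] at hwP
    simp only [Finset.mem_filter, not_and, not_lt] at hwP
    exact hwP hwRn
  have hrt : r < t := hcon
  obtain ⟨v, hv⟩ := hne ⟨r, hrt⟩
  have hvR : v ∈ R r := by
    rw [hPdef ⟨r, hrt⟩] at hv
    exact (Finset.mem_filter.mp hv).1
  exact hnoT (greedy_embed T hT r c hecc D R v hvR
    (fun w k hk hwk => hstep k (lt_trans hk hrt) w hwk))
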